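/- Let X be a random variable with E[|X|] < ∞ and N ~ N(0,1) independent of X, and let Y = X + N with density p_Y(y) = (1/√(2π)) E[e^{−(y−X)²/2}]. Writing p_Y = e^{−Q}, the function Q is differentiable and for every y ∈ ℝ: Q′(y) = −p_Y′(y)/p_Y(y) = y − E[X e^{−(y−X)²/2}]/E[e^{−(y−X)²/2}] = y − E[X | Y = y] = E[N | Y = y]. -/

import Mathlib

open MeasureTheory ProbabilityTheory Real Filter

private lemma tweedie_bound (t : ℝ) : |t * Real.exp (-t ^ 2 / 2)| ≤ 1 := by
  have he : (0:ℝ) < Real.exp (-t ^ 2 / 2) := Real.exp_pos _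
  have h1 : |t| ≤ Real.exp (t ^ 2 / 2) := by
    have h2 : |t| ≤ 1 + t ^ 2 / 2 := by nlinarith [sq_abs t, sq_nonneg (|t| - 1)]
    have h3 : 1 + t ^ 2 / 2 ≤ Real.exp (t ^ 2 / 2) := by
      have := Real.add_one_le_exp (t ^ 2 / 2); linarith
    linarith
  have : |t| * Real.exp (-t ^ 2 / 2) ≤ Real.exp (t ^ 2 / 2) * Real.exp (-t ^ 2 / 2) :=
    mul_le_mul_of_nonneg_right h1 he.le
  rw [← Real.exp_add] at this
  have h0 : t ^ 2 / 2 + -t ^ 2 / 2 = 0 := by ring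
  rw [h0, Real.exp_zero] at this
  simpa [abs_mul, abs_of_pos he] using this

private lemma tweedie_hasDerivAt (c x : ℝ) :
    HasDerivAt (fun t => Real.exp (-(t - c) ^ 2 / 2))
      (-(x - c) * Real.exp (-(x - c) ^ 2 / 2)) x := by
  have h1 : HasDerivAt (fun t : ℝ => -(t - c) ^ 2 / 2) (-(x - c)) x := by
    have := (((hasDerivAt_id x).sub_const c).pow 2).neg.div_const 2
    refine this.congr_deriv ?_
    simp only [id_eq]
    ring
  have := h1.exp
  convert this using 1
  ring

theorem deriv_neg_log_output_density
    {Ω : Type*} [MeasurableSpace Ω] (μ : Measure Ω) [IsProbabilityMeasure μ]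
    (X N : Ω → ℝ) (hXmeas : Measurable X) (hNmeas : Measurable N)
    (hXint : Integrable X μ)
    (hN : Measure.map N μ = gaussianReal 0 1)
    (hindep : IndepFun X N μ)
    (pY Q : ℝ → ℝ)
    (hpY : ∀ y, pY y = (Real.sqrt (2 * π))⁻¹ * ∫ ω, Real.exp (-(y - X ω) ^ 2 / 2) ∂μ)
    (hQ : ∀ y, Q y = -Real.log (pY y)) :
    Differentiable ℝ Q ∧ ∀ y : ℝ,
      deriv Q y = -(deriv pY y / pY y) ∧
      deriv Q y = y - (∫ ω, X ω * Real.exp (-(y - X ω) ^ 2 / 2) ∂μ) /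
          (∫ ω, Real.exp (-(y - X ω) ^ 2 / 2) ∂μ) ∧
      deriv Q y = (∫ ω, (y - X ω) * Real.exp (-(y - X ω) ^ 2 / 2) ∂μ) /
          (∫ ω, Real.exp (-(y - X ω) ^ 2 / 2) ∂μ) := by
  set c : ℝ := (Real.sqrt (2 * π))⁻¹ with hc
  have hcpos : 0 < c := by
    rw [hc]
    exact inv_pos.2 (Real.sqrt_pos.2 (by positivity))
  set g : ℝ → ℝ := fun y => ∫ ω, Real.exp (-(y - X ω) ^ 2 / 2) ∂μ with hg
  set g' : ℝ → ℝ := fun y => ∫ ω, -(y - X ω) * Real.exp (-(y - X ω) ^ 2 / 2) ∂μ with hg'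
  -- measurability
  have hmeas : ∀ y : ℝ, AEStronglyMeasurable (fun ω => Real.exp (-(y - X ω) ^ 2 / 2)) μ := by
    intro y
    exact (Real.measurable_exp.comp (((measurable_const.sub hXmeas).pow_const 2).neg.div_const 2)).aestronglyMeasurable
  have hle1 : ∀ (y : ℝ) (ω : Ω), Real.exp (-(y - X ω) ^ 2 / 2) ≤ 1 := by
    intro y ω
    apply Real.exp_le_one_iff.2
    have : (0:ℝ) ≤ (y - X ω) ^ 2 := sq_nonneg _
    linarith
  have hepos : ∀ (y : ℝ) (ω : Ω), 0 < Real.exp (-(y - X ω) ^ 2 / 2) := fun _ _ => Real.exp_pos _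
  have hint : ∀ y : ℝ, Integrable (fun ω => Real.exp (-(y - X ω) ^ 2 / 2)) μ := by
    intro y
    refine (integrable_const (1:ℝ)).mono' (hmeas y) ?_
    filter_upwards with ω
    rw [Real.norm_eq_abs, abs_of_pos (hepos y ω)]
    exact hle1 y ω
  have hgpos : ∀ y : ℝ, 0 < g y := by
    intro y
    exact integral_exp_pos (hint y)
  -- integrability of X * e
  have hintX : ∀ y : ℝ, Integrable (fun ω => X ω * Real.exp (-(y - X ω) ^ 2 / 2)) μ := by
    intro y
    refine hXint.abs.mono' (hXmeas.aestronglyMeasurable.mul (hmeas y)) ?_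
    filter_upwards with ω
    rw [Real.norm_eq_abs, abs_mul, abs_of_pos (hepos y ω)]
    calc |X ω| * Real.exp (-(y - X ω) ^ 2 / 2) ≤ |X ω| * 1 :=
          mul_le_mul_of_nonneg_left (hle1 y ω) (abs_nonneg _)
      _ = |X ω| := mul_one _
  -- derivative of g
  have hgderiv : ∀ y : ℝ, HasDerivAt g (g' y) y := by
    intro y
    have := hasDerivAt_integral_of_dominated_loc_of_deriv_le
      (F := fun x ω => Real.exp (-(x - X ω) ^ 2 / 2))
      (F' := fun x ω => -(x - X ω) * Real.exp (-(x - X ω) ^ 2 / 2))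
      (x₀ := y) (bound := fun _ => (1:ℝ)) (s := Metric.ball y 1) (Metric.ball_mem_nhds y one_pos)
      (Filter.Eventually.of_forall fun x => hmeas x)
      (hint y)
      ((((measurable_const.sub hXmeas).neg).mul
        (Real.measurable_exp.comp (((measurable_const.sub hXmeas).pow_const 2).neg.div_const 2))).aestronglyMeasurable)
      ?_ (integrable_const 1) ?_
    · exact this.2
    · filter_upwards with ω x _
      rw [Real.norm_eq_abs]
      have := tweedie_bound (x - X ω)
      calc |(-(x - X ω)) * Real.exp (-(x - X ω) ^ 2 / 2)|
          = |(x - X ω) * Real.exp (-(x - X ω) ^ 2 / 2)| := by rw [neg_mul, abs_neg]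
        _ ≤ 1 := this
    · filter_upwards with ω x _
      exact tweedie_hasDerivAt (X ω) x
  -- g' in terms of integrals
  have hg'eq : ∀ y : ℝ,
      g' y = (∫ ω, X ω * Real.exp (-(y - X ω) ^ 2 / 2) ∂μ) - y * g y := by
    intro y
    have : (fun ω => -(y - X ω) * Real.exp (-(y - X ω) ^ 2 / 2))
        = fun ω => X ω * Real.exp (-(y - X ω) ^ 2 / 2)
            - y * Real.exp (-(y - X ω) ^ 2 / 2) := by
      funext ω; ring
    show (∫ ω, -(y - X ω) * Real.exp (-(y - X ω) ^ 2 / 2) ∂μ) = _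
    rw [this, integral_sub (hintX y) ((hint y).const_mul y), integral_const_mul]
  have hIyX : ∀ y : ℝ,
      (∫ ω, (y - X ω) * Real.exp (-(y - X ω) ^ 2 / 2) ∂μ) = - g' y := by
    intro y
    rw [hg'eq y]
    have : (fun ω => (y - X ω) * Real.exp (-(y - X ω) ^ 2 / 2))
        = fun ω => y * Real.exp (-(y - X ω) ^ 2 / 2)
            - X ω * Real.exp (-(y - X ω) ^ 2 / 2) := by
      funext ω; ring
    rw [this, integral_sub ((hint y).const_mul y) (hintX y), integral_const_mul]
    ring
  -- pY as c * g
  have hpYfun : pY = fun y => c * g y := by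
    funext y; rw [hpY y]
  have hpYderiv : ∀ y : ℝ, HasDerivAt pY (c * g' y) y := by
    intro y
    rw [hpYfun]
    exact (hgderiv y).const_mul c
  have hpYpos : ∀ y : ℝ, 0 < pY y := by
    intro y
    rw [hpY y]
    exact mul_pos hcpos (hgpos y)
  have hQderiv : ∀ y : ℝ, HasDerivAt Q (-(c * g' y / pY y)) y := by
    intro y
    have hlog : HasDerivAt (fun y => Real.log (pY y)) (c * g' y / pY y) y :=
      (hpYderiv y).log (hpYpos y).ne'
    have := hlog.neg
    have hQfun : Q = fun y => -Real.log (pY y) := funext hQ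
    rw [hQfun]
    exact this
  refine ⟨fun y => (hQderiv y).differentiableAt, fun y => ?_⟩
  have hdQ : deriv Q y = -(c * g' y / pY y) := (hQderiv y).deriv
  have hdpY : deriv pY y = c * g' y := (hpYderiv y).deriv
  have hgy := hgpos y
  have hpy := hpYpos y
  have hI : (∫ ω, Real.exp (-(y - X ω) ^ 2 / 2) ∂μ) = g y := rfl
  have hIX : (∫ ω, X ω * Real.exp (-(y - X ω) ^ 2 / 2) ∂μ) = g' y + y * g y := by
    rw [hg'eq]; ring
  refine ⟨by rw [hdQ, hdpY], ?_, ?_⟩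
  · rw [hdQ, hpY y, hI, hIX]
    rw [mul_div_mul_left _ _ hcpos.ne']
    field_simp
    ring
  · rw [hdQ, hIyX y, hpY y, hI]
    rw [mul_div_mul_left _ _ hcpos.ne', neg_div]
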